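/- arXiv:1904.10302 — 6 statements merged into one kernel-verified Lean document; each statement's English description precedes it below -/
import Mathlib

section
/- In a residuated lattice A, for any filter F, the coannihilator F^⊥ = {a ∈ A | a ∨ x = 1 for all x ∈ F} is the pseudocomplement of F in the lattice of filters; that is, F ∩ F^⊥ = {1}, and any filter G with F ∩ G = {1} satisfies G ⊆ F^⊥. -/
/-- A (bounded, integral, commutative) residuated lattice. -/
class ResLattice (A : Type*) extends Lattice A, CommMonoid A, OrderBot A where
  himp : A → A → A
  adjunction : ∀ x y z : A, x * y ≤ z ↔ x ≤ himp y z
  le_one : ∀ x : A, x ≤ 1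

variable {A : Type*} [ResLattice A]

/-- Coannihilator of a subset: `X^⊥ = {a | a ⊔ x = 1 for all x ∈ X}`. -/
def Coann (X : Set A) : Set A := {a | ∀ x ∈ X, a ⊔ x = 1}

/-- Coannulet of an element: `x^⊥`. -/
def rperp (x : A) : Set A := Coann {x}

/-- The principal filter generated by `x`. -/
def PFil (x : A) : Set A := {a | ∃ n : ℕ, 0 < n ∧ x ^ n ≤ a}

/-- Filters of a residuated lattice. -/
def IsRLFilter (F : Set A) : Prop :=
  F.Nonempty ∧ (∀ x ∈ F, ∀ y ∈ F, x * y ∈ F) ∧ (∀ x ∈ F, ∀ y : A, x ⊔ y ∈ F)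

/-- Prime filters. -/
def IsRLPrime (P : Set A) : Prop :=
  IsRLFilter P ∧ P ≠ Set.univ ∧ ∀ x y : A, x ⊔ y ∈ P → x ∈ P ∨ y ∈ P

/-- Minimal prime filters. -/
def IsRLMinPrime (P : Set A) : Prop :=
  IsRLPrime P ∧ ∀ Q : Set A, IsRLPrime Q → Q ⊆ P → Q = P

/-- Quasicomplemented residuated lattice. -/
def Quasicomplemented (A : Type*) [ResLattice A] : Prop :=
  ∀ x : A, ∃ y : A, Coann (rperp x) = rperp y

/-- α-filters. -/
def IsAlphaFilter (F : Set A) : Prop :=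
  IsRLFilter F ∧ ∀ x ∈ F, Coann (rperp x) ⊆ F

/-- The α-filter generated by a subset. -/
def alphaGen (X : Set A) : Set A := ⋂₀ {G : Set A | IsAlphaFilter G ∧ X ⊆ G}

theorem stmt0 (F : Set A) (hF : IsRLFilter F) :
    F ∩ Coann F = {1} ∧ ∀ G : Set A, IsRLFilter G → F ∩ G = {1} → G ⊆ Coann F := by
  obtain ⟨⟨x0, hx0⟩, hmul, hsup⟩ := hF
  have h1F : (1 : A) ∈ F := by
    have := hsup x0 hx0 1
    rwa [sup_eq_right.mpr (ResLattice.le_one x0)] at this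
  constructor
  · ext a
    constructor
    · rintro ⟨haF, haC⟩
      have := haC a haF
      simpa using this
    · rintro rfl
      exact ⟨h1F, fun x _ => sup_eq_left.mpr (ResLattice.le_one x)⟩
  · intro G hG hFG g hg x hx
    obtain ⟨_, _, hGsup⟩ := hG
    have h1 : g ⊔ x ∈ G := hGsup g hg x
    have h2 : g ⊔ x ∈ F := by
      have := hsup x hx g
      rwa [sup_comm] at this
    have : g ⊔ x ∈ F ∩ G := ⟨h2, h1⟩
    rw [hFG] at this
    exact this
end

section
/- In a residuated lattice, any non-dense prime filter P (i.e., P^⊥ ≠ {1}) is a coannulet: there exists x ∈ A with P = x^⊥. -/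
variable {A : Type*} [ResLattice A]

theorem stmt1 (P : Set A) (hP : IsRLPrime P) (hnd : Coann P ≠ {1}) :
    ∃ x : A, P = rperp x := by
  have h1 : (1:A) ∈ Coann P := by
    intro p _
    exact sup_eq_left.mpr (ResLattice.le_one p)
  obtain ⟨x, hx, hx1⟩ : ∃ x ∈ Coann P, x ≠ 1 := by
    by_contra h
    push_neg at h
    apply hnd
    ext a
    constructor
    · exact fun ha => h a ha
    · rintro rfl
      exact h1
  refine ⟨x, ?_⟩
  obtain ⟨⟨⟨p0, hp0⟩, hmul, hsup⟩, hne, hprime⟩ := hP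
  have h1P : (1:A) ∈ P := by
    have := hsup p0 hp0 1
    rwa [sup_eq_right.mpr (ResLattice.le_one p0)] at this
  ext a
  constructor
  · intro ha y hy
    rcases hy with rfl
    rw [sup_comm]
    exact hx a ha
  · intro ha
    have hax : a ⊔ x = 1 := ha x rfl
    have hmem : a ⊔ x ∈ P := hax ▸ h1P
    rcases hprime a x hmem with h | h
    · exact h
    · exact absurd (by simpa using hx x h) hx1
end

section
/- A residuated lattice A is quasicomplemented (for every x there is y with x^⊥⊥ = y^⊥) if and only if for any x ∈ A there exists y ∈ A such that x ⊙ y is dense (i.e., (x⊙y)^⊥ = {1}) and x ∨ y = 1. -/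
variable {A : Type*} [ResLattice A]

lemma rl_mem_rperp {a x : A} : a ∈ rperp x ↔ a ⊔ x = 1 := by
  simp [rperp, Coann]

lemma rl_mul_le_mul_right {a b : A} (h : a ≤ b) (c : A) : a * c ≤ b * c := by
  have hb : b ≤ ResLattice.himp c (b * c) := (ResLattice.adjunction b c (b * c)).1 le_rfl
  exact (ResLattice.adjunction a c (b * c)).2 (le_trans h hb)

lemma rl_mul_le_left (a b : A) : a * b ≤ a := by
  have h : b * a ≤ 1 * a := rl_mul_le_mul_right (ResLattice.le_one b) a
  calc a * b = b * a := mul_comm a b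
    _ ≤ 1 * a := h
    _ = a := one_mul a

lemma rl_mul_le_right (a b : A) : a * b ≤ b := by
  rw [mul_comm]; exact rl_mul_le_left b a

lemma rl_mul_sup_le (a b c : A) : a * (b ⊔ c) ≤ a * b ⊔ a * c := by
  rw [mul_comm]
  refine (ResLattice.adjunction _ _ _).2 (sup_le ?_ ?_)
  · exact (ResLattice.adjunction _ _ _).1 (by rw [mul_comm]; exact le_sup_left)
  · exact (ResLattice.adjunction _ _ _).1 (by rw [mul_comm]; exact le_sup_right)

lemma rl_sup_mul {a x y : A} (hx : a ⊔ x = 1) (hy : a ⊔ y = 1) : a ⊔ x * y = 1 := by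
  have key : (a ⊔ x) * (a ⊔ y) ≤ a ⊔ x * y := by
    calc (a ⊔ x) * (a ⊔ y) ≤ (a ⊔ x) * a ⊔ (a ⊔ x) * y := rl_mul_sup_le _ _ _
      _ ≤ a ⊔ x * y := by
        refine sup_le (le_trans (rl_mul_le_right _ _) le_sup_left) ?_
        calc (a ⊔ x) * y = y * (a ⊔ x) := mul_comm _ _
          _ ≤ y * a ⊔ y * x := rl_mul_sup_le _ _ _
          _ ≤ a ⊔ x * y := sup_le (le_trans (rl_mul_le_right _ _) le_sup_left)
              (le_trans (le_of_eq (mul_comm _ _)) le_sup_right)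
  rw [hx, hy, one_mul] at key
  exact le_antisymm (ResLattice.le_one _) key

theorem stmt2 :
    Quasicomplemented A ↔ ∀ x : A, ∃ y : A, rperp (x * y) = {1} ∧ x ⊔ y = 1 := by
  constructor
  · intro h x
    obtain ⟨y, hy⟩ := h x
    have hx : x ∈ Coann (rperp x) := by
      intro z hz
      rw [sup_comm]
      exact rl_mem_rperp.1 hz
    have hxy : x ⊔ y = 1 := rl_mem_rperp.1 (hy ▸ hx)
    refine ⟨y, ?_, hxy⟩
    ext a
    simp only [Set.mem_singleton_iff, rl_mem_rperp]
    constructor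
    · intro ha
      have hax : a ⊔ x = 1 :=
        le_antisymm (ResLattice.le_one _) (ha ▸ sup_le_sup_left (rl_mul_le_left x y) a)
      have hay : a ⊔ y = 1 :=
        le_antisymm (ResLattice.le_one _) (ha ▸ sup_le_sup_left (rl_mul_le_right x y) a)
      have haC : a ∈ Coann (rperp x) := hy ▸ rl_mem_rperp.2 hay
      have := haC a (rl_mem_rperp.2 hax)
      simpa using this
    · rintro rfl
      exact le_antisymm (ResLattice.le_one _) le_sup_left
  · intro h x
    obtain ⟨y, hd, hs⟩ := h x
    refine ⟨y, ?_⟩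
    ext a
    simp only [rl_mem_rperp]
    constructor
    · intro ha
      exact ha y (rl_mem_rperp.2 (by rw [sup_comm]; exact hs))
    · intro ha z hz
      have hzx : z ⊔ x = 1 := rl_mem_rperp.1 hz
      have h1 : (a ⊔ z) ⊔ x = 1 :=
        le_antisymm (ResLattice.le_one _)
          (hzx ▸ sup_le (le_trans le_sup_right le_sup_left) le_sup_right)
      have h2 : (a ⊔ z) ⊔ y = 1 :=
        le_antisymm (ResLattice.le_one _)
          (ha ▸ sup_le (le_trans le_sup_left le_sup_left) le_sup_right)
      have h3 : (a ⊔ z) ⊔ x * y = 1 := rl_sup_mul h1 h2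
      have : a ⊔ z ∈ rperp (x * y) := rl_mem_rperp.2 h3
      rw [hd] at this
      simpa using this
end

section
/- In a residuated lattice A, the α-filters form a frame: for any α-filter F and family {G_i} of α-filters, F ∩ (⋁^α_i G_i) = ⋁^α_i (F ∩ G_i), where ⋁^α denotes the join in the complete lattice of α-filters. -/
variable {A : Type*} [ResLattice A]

section Aux
variable {A : Type*} [ResLattice A]

lemma adj {x y z : A} : x * y ≤ z ↔ x ≤ ResLattice.himp y z := ResLattice.adjunction x y z

lemma sup_one' (x : A) : x ⊔ 1 = 1 := sup_eq_right.mpr (ResLattice.le_one x)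

lemma mul_le_r {y z : A} (h : y ≤ z) (x : A) : y * x ≤ z * x :=
  adj.mpr (h.trans (adj.mp (le_refl (z * x))))

lemma mul_le_l (x : A) {y z : A} (h : y ≤ z) : x * y ≤ x * z := by
  rw [mul_comm x y, mul_comm x z]; exact mul_le_r h x

lemma mul_le_left' (x y : A) : x * y ≤ x := by
  calc x * y = y * x := mul_comm x y
    _ ≤ 1 * x := mul_le_r (ResLattice.le_one y) x
    _ = x := one_mul x

lemma sup_mul_sup_le (a x y : A) : (a ⊔ x) * (a ⊔ y) ≤ a ⊔ x * y := by
  apply adj.mpr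
  apply sup_le
  · exact adj.mp ((mul_le_left' a (a ⊔ y)).trans le_sup_left)
  · apply adj.mp
    rw [mul_comm]
    apply adj.mpr
    apply sup_le
    · exact adj.mp ((mul_le_left' a x).trans le_sup_left)
    · exact adj.mp (show y * x ≤ a ⊔ x * y from (mul_comm y x) ▸ le_sup_right)

lemma mem_rperp {b p : A} : b ∈ rperp p ↔ b ⊔ p = 1 := by
  constructor
  · intro h; exact h p rfl
  · intro h x hx; rw [Set.mem_singleton_iff] at hx; rw [hx]; exact h

lemma eq_one_of_one_le {u : A} (h : (1:A) ≤ u) : u = 1 :=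
  le_antisymm (ResLattice.le_one u) h

lemma one_mem_coann (S : Set A) : (1:A) ∈ Coann S :=
  fun s _ => sup_eq_left.mpr (ResLattice.le_one s)

lemma coann_alpha (S : Set A) : IsAlphaFilter (Coann S) := by
  refine ⟨⟨⟨1, one_mem_coann S⟩, ?_, ?_⟩, ?_⟩
  · intro a ha b hb s hs
    apply eq_one_of_one_le
    calc (1:A) = (s ⊔ a) * (s ⊔ b) := by
          rw [sup_comm s a, sup_comm s b, ha s hs, hb s hs, one_mul]
      _ ≤ s ⊔ a * b := sup_mul_sup_le s a b
      _ = a * b ⊔ s := sup_comm s (a*b)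
  · intro a ha y s hs
    apply eq_one_of_one_le
    calc (1:A) = a ⊔ s := (ha s hs).symm
      _ ≤ a ⊔ y ⊔ s := sup_le_sup_right le_sup_left s
  · intro a ha b hb s hs
    exact hb s (mem_rperp.mpr (by rw [sup_comm]; exact ha s hs))

/-- Explicit description of the generated α-filter. -/
def Dgen (X : Set A) : Set A :=
  {a | ∃ L : List A, (∀ x ∈ L, x ∈ X) ∧ a ∈ Coann (rperp L.prod)}

lemma one_mem_filter {F : Set A} (h : IsRLFilter F) : (1:A) ∈ F := by
  obtain ⟨x, hx⟩ := h.1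
  have := h.2.2 x hx 1
  rwa [sup_one'] at this

lemma prod_mem_filter {F : Set A} (h : IsRLFilter F) :
    ∀ {L : List A}, (∀ x ∈ L, x ∈ F) → L.prod ∈ F := by
  intro L
  induction L with
  | nil => intro _; simpa using one_mem_filter h
  | cons x L ih =>
      intro hL
      rw [List.prod_cons]
      exact h.2.1 x (hL x List.mem_cons_self) L.prod
        (ih fun y hy => hL y (List.mem_cons_of_mem x hy))

lemma coann_rperp_mono {p q : A} (h : p ≤ q) : Coann (rperp q) ⊆ Coann (rperp p) := by
  intro a ha b hb
  apply ha
  rw [mem_rperp] at hb ⊢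
  apply eq_one_of_one_le
  rw [← hb]
  exact sup_le_sup_left h b

lemma dgen_sub {X H : Set A} (hH : IsAlphaFilter H) (hXH : X ⊆ H) : Dgen X ⊆ H := by
  rintro a ⟨L, hL, ha⟩
  exact hH.2 L.prod (prod_mem_filter hH.1 fun x hx => hXH (hL x hx)) ha

lemma subset_dgen (X : Set A) : X ⊆ Dgen X := by
  intro x hx
  refine ⟨[x], by simpa using hx, ?_⟩
  intro b hb
  rw [List.prod_singleton, mem_rperp] at hb
  rw [sup_comm]; exact hb

lemma dgen_alpha (X : Set A) : IsAlphaFilter (Dgen X) := by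
  refine ⟨⟨⟨1, [], by simp, by simpa using one_mem_coann (rperp (1:A))⟩, ?_, ?_⟩, ?_⟩
  · rintro a ⟨L, hL, ha⟩ b ⟨L', hL', hb⟩
    refine ⟨L ++ L', ?_, ?_⟩
    · intro x hx
      rcases List.mem_append.mp hx with h | h
      · exact hL x h
      · exact hL' x h
    · rw [List.prod_append]
      have h1 : a ∈ Coann (rperp (L.prod * L'.prod)) :=
        coann_rperp_mono (mul_le_left' _ _) ha
      have h2 : b ∈ Coann (rperp (L.prod * L'.prod)) :=
        coann_rperp_mono ((mul_comm L.prod L'.prod) ▸ mul_le_left' L'.prod L.prod) hb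
      exact (coann_alpha (rperp (L.prod * L'.prod))).1.2.1 a h1 b h2
  · rintro a ⟨L, hL, ha⟩ y
    exact ⟨L, hL, (coann_alpha (rperp L.prod)).1.2.2 a ha y⟩
  · rintro a ⟨L, hL, ha⟩ b hb
    exact ⟨L, hL, (coann_alpha (rperp L.prod)).2 a ha hb⟩

lemma alphaGen_eq_dgen (X : Set A) : alphaGen X = Dgen X := by
  apply Set.Subset.antisymm
  · exact Set.sInter_subset_of_mem ⟨dgen_alpha X, subset_dgen X⟩
  · intro a ha
    rw [alphaGen, Set.mem_sInter]
    rintro H ⟨hH, hXH⟩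
    exact dgen_sub hH hXH ha

lemma map_sup_prod_le (a : A) (L : List A) :
    (L.map (fun x => a ⊔ x)).prod ≤ a ⊔ L.prod := by
  induction L with
  | nil => simpa using (sup_one' a).ge
  | cons x L ih =>
      rw [List.map_cons, List.prod_cons, List.prod_cons]
      calc (a ⊔ x) * (L.map (fun x => a ⊔ x)).prod
          ≤ (a ⊔ x) * (a ⊔ L.prod) := mul_le_l _ ih
        _ ≤ a ⊔ x * L.prod := sup_mul_sup_le a x L.prod

end Aux

theorem stmt10 {ι : Type*} (F : Set A) (hF : IsAlphaFilter F)
    (G : ι → Set A) (hG : ∀ i, IsAlphaFilter (G i)) :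
    F ∩ alphaGen (⋃ i, G i) = alphaGen (⋃ i, F ∩ G i) := by
  ext a
  constructor
  · rintro ⟨haF, haG⟩
    rw [alphaGen_eq_dgen] at haG ⊢
    obtain ⟨L, hL, ha⟩ := haG
    refine ⟨L.map (fun x => a ⊔ x), ?_, ?_⟩
    · intro y hy
      rw [List.mem_map] at hy
      obtain ⟨x, hx, rfl⟩ := hy
      obtain ⟨i, hxi⟩ := Set.mem_iUnion.mp (hL x hx)
      refine Set.mem_iUnion.mpr ⟨i, ?_⟩
      exact ⟨hF.1.2.2 a haF x, by rw [sup_comm]; exact (hG i).1.2.2 x hxi a⟩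
    · intro b hb
      rw [mem_rperp] at hb
      have hprod := map_sup_prod_le a L
      have h1 : b ⊔ (a ⊔ L.prod) = 1 := by
        apply eq_one_of_one_le
        rw [← hb]
        exact sup_le_sup_left hprod b
      have h2 : (a ⊔ b) ⊔ L.prod = 1 := by
        rw [sup_comm a b, sup_assoc]; exact h1
      have h3 := ha (a ⊔ b) (mem_rperp.mpr h2)
      rwa [← sup_assoc, sup_idem] at h3
  · intro ha
    constructor
    · have hm : F ∈ {H : Set A | IsAlphaFilter H ∧ (⋃ i, F ∩ G i) ⊆ H} :=
        ⟨hF, Set.iUnion_subset fun i => Set.inter_subset_left⟩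
      exact Set.sInter_subset_of_mem hm ha
    · intro H hH
      obtain ⟨hHa, hHsub⟩ := hH
      exact ha H ⟨hHa, (Set.iUnion_mono fun i => Set.inter_subset_right).trans hHsub⟩
end

section
/- In a residuated lattice, a filter F is an α-filter if and only if for all x, y: x^⊥ = y^⊥ and x ∈ F imply y ∈ F. -/
variable {A : Type*} [ResLattice A]

theorem stmt12 (F : Set A) (hF : IsRLFilter F) :
    IsAlphaFilter F ↔ ∀ x y : A, rperp x = rperp y → x ∈ F → y ∈ F := by
  constructor
  · intro hα x y hxy hx
    apply hα.2 x hx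
    rw [hxy]
    intro a ha
    have : a ⊔ y = 1 := ha y rfl
    rw [sup_comm] at this
    exact this
  · intro h
    refine ⟨hF, ?_⟩
    intro x hx y hy
    -- hy : y ∈ Coann (rperp x), i.e. ∀ a, a ⊔ x = 1 → y ⊔ a = 1
    have key : rperp (x ⊔ y) = rperp y := by
      ext a
      simp only [rperp, Coann, Set.mem_setOf_eq, Set.mem_singleton_iff,
        forall_eq]
      constructor
      · intro hA
        have h1 : (a ⊔ y) ⊔ x = 1 := by
          rw [sup_right_comm]; rw [← sup_assoc] at hA; exact hA
        have h2 : y ⊔ (a ⊔ y) = 1 := hy (a ⊔ y) (by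
          simp only [rperp, Coann, Set.mem_setOf_eq, Set.mem_singleton_iff, forall_eq]
          exact h1)
        rw [sup_comm, sup_assoc, sup_idem] at h2
        exact h2
      · intro hA
        apply le_antisymm (ResLattice.le_one _)
        calc (1:A) = a ⊔ y := hA.symm
        _ ≤ a ⊔ (x ⊔ y) := sup_le_sup_left le_sup_right a
    exact h (x ⊔ y) y key (hF.2.2 x hx y)
end

section
/- A residuated lattice A is weakly disjunctive if and only if every filter of A is an α-filter, if and only if every prime filter of A is an α-filter. -/
variable {A : Type*} [ResLattice A]

namespace RL15

lemma le_one' (x : A) : x ≤ 1 := ResLattice.le_one x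

lemma mul_le_mul_right'' {a b : A} (h : a ≤ b) (c : A) : a * c ≤ b * c := by
  rw [ResLattice.adjunction]
  exact le_trans h ((ResLattice.adjunction b c (b * c)).1 le_rfl)

lemma mul_le_mul'' {a b c d : A} (h1 : a ≤ b) (h2 : c ≤ d) : a * c ≤ b * d := by
  calc a * c ≤ b * c := mul_le_mul_right'' h1 c
  _ = c * b := mul_comm b c
  _ ≤ d * b := mul_le_mul_right'' h2 b
  _ = b * d := mul_comm d b

lemma mul_le_left (a b : A) : a * b ≤ a := by
  calc a * b ≤ a * 1 := mul_le_mul'' le_rfl (le_one' b)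
  _ = a := mul_one a

lemma mul_le_right (a b : A) : a * b ≤ b := by
  rw [mul_comm]; exact mul_le_left b a

lemma mul_sup (a b c : A) : a * (b ⊔ c) = a * b ⊔ a * c := by
  apply le_antisymm
  · rw [mul_comm, ResLattice.adjunction]
    apply sup_le
    · rw [← ResLattice.adjunction, mul_comm]; exact le_sup_left
    · rw [← ResLattice.adjunction, mul_comm]; exact le_sup_right
  · exact sup_le (mul_le_mul'' le_rfl le_sup_left) (mul_le_mul'' le_rfl le_sup_right)

lemma sup_mul_sup_le (s u v : A) : (s ⊔ u) * (s ⊔ v) ≤ s ⊔ u * v := by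
  rw [mul_sup]
  apply sup_le
  · exact le_trans (mul_le_right _ _) le_sup_left
  · rw [mul_comm, mul_sup]
    apply sup_le
    · exact le_trans (mul_le_right _ _) le_sup_left
    · rw [mul_comm]; exact le_sup_right

lemma pow_mono' {a b : A} (h : a ≤ b) (n : ℕ) : a ^ n ≤ b ^ n := by
  induction n with
  | zero => simp
  | succ k ih => rw [pow_succ, pow_succ]; exact mul_le_mul'' ih h

lemma sup_pow_le (s u : A) (n : ℕ) : (s ⊔ u) ^ n ≤ s ⊔ u ^ n := by
  induction n with
  | zero => simp
  | succ k ih =>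
    rw [pow_succ]
    calc (s ⊔ u) ^ k * (s ⊔ u) ≤ (s ⊔ u ^ k) * (s ⊔ u) := mul_le_mul'' ih le_rfl
    _ ≤ s ⊔ u ^ k * u := sup_mul_sup_le s _ u
    _ = s ⊔ u ^ (k + 1) := by rw [pow_succ]

lemma sup_pow_pow_le (a b : A) (n m : ℕ) : (a ⊔ b) ^ (m * n) ≤ a ^ n ⊔ b ^ m := by
  rw [pow_mul]
  calc ((a ⊔ b) ^ m) ^ n ≤ (a ⊔ b ^ m) ^ n := pow_mono' (sup_pow_le a b m) n
  _ = (b ^ m ⊔ a) ^ n := by rw [sup_comm]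
  _ ≤ b ^ m ⊔ a ^ n := sup_pow_le _ _ _
  _ = a ^ n ⊔ b ^ m := sup_comm _ _

lemma mem_of_le {F : Set A} (hF : IsRLFilter F) {x a : A} (hx : x ∈ F) (h : x ≤ a) : a ∈ F := by
  have := hF.2.2 x hx a
  rwa [sup_eq_right.2 h] at this

lemma one_mem {F : Set A} (hF : IsRLFilter F) : (1 : A) ∈ F := by
  obtain ⟨x, hx⟩ := hF.1
  exact mem_of_le hF hx (le_one' x)

lemma pow_mem {F : Set A} (hF : IsRLFilter F) {x : A} (hx : x ∈ F) (n : ℕ) : x ^ n ∈ F := by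
  induction n with
  | zero => simp only [pow_zero]; exact one_mem hF
  | succ k ih => rw [pow_succ]; exact hF.2.1 _ ih _ hx

lemma self_mem_PFil (x : A) : x ∈ PFil x := ⟨1, one_pos, by simp⟩

lemma PFil_filter (x : A) : IsRLFilter (PFil x) := by
  refine ⟨⟨x, self_mem_PFil x⟩, ?_, ?_⟩
  · rintro a ⟨n, hn, ha⟩ b ⟨m, hm, hb⟩
    exact ⟨n + m, by omega, by rw [pow_add]; exact mul_le_mul'' ha hb⟩
  · rintro a ⟨n, hn, ha⟩ y
    exact ⟨n, hn, le_trans ha le_sup_left⟩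

lemma PFil_subset {F : Set A} (hF : IsRLFilter F) {y : A} (hy : y ∈ F) : PFil y ⊆ F := by
  rintro a ⟨n, _, ha⟩
  exact mem_of_le hF (pow_mem hF hy n) ha

lemma mem_rperp {b x : A} : b ∈ rperp x ↔ b ⊔ x = 1 := by
  simp [rperp, Coann]

lemma rperp_mul (x a : A) : rperp (x * a) = rperp x ∩ rperp a := by
  ext b
  simp only [mem_rperp, Set.mem_inter_iff]
  constructor
  · intro h
    constructor
    · exact le_antisymm (le_one' _) (h ▸ sup_le_sup_left (mul_le_left x a) b)
    · exact le_antisymm (le_one' _) (h ▸ sup_le_sup_left (mul_le_right x a) b)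
  · rintro ⟨h1, h2⟩
    refine le_antisymm (le_one' _) ?_
    calc (1 : A) = (b ⊔ x) * (b ⊔ a) := by rw [h1, h2, one_mul]
    _ ≤ b ⊔ x * a := sup_mul_sup_le b x a

lemma self_mem_coann_rperp (x : A) : x ∈ Coann (rperp x) := by
  intro b hb
  rw [sup_comm]
  exact mem_rperp.1 hb

/-- Weak disjunctivity implies every filter is an α-filter. -/
lemma wd_to_alpha (h : ∀ x y : A, rperp x = rperp y → PFil x = PFil y)
    {F : Set A} (hF : IsRLFilter F) : IsAlphaFilter F := by
  refine ⟨hF, fun x hx a ha => ?_⟩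
  have hsub : rperp x ⊆ rperp a := by
    intro b hb
    rw [mem_rperp, sup_comm]
    exact ha b hb
  have hperp : rperp (x * a) = rperp x := by
    rw [rperp_mul]
    exact Set.inter_eq_self_of_subset_left hsub
  have hxa : x * a ∈ PFil x := (h (x * a) x hperp) ▸ self_mem_PFil (x * a)
  obtain ⟨n, _, hle⟩ := hxa
  exact mem_of_le hF (pow_mem hF hx n) (le_trans hle (mul_le_right x a))

/-- Prime filter extension theorem. -/
lemma prime_extension {F : Set A} (hF : IsRLFilter F) {y : A} (hy : y ∉ F) :
    ∃ P : Set A, IsRLPrime P ∧ F ⊆ P ∧ y ∉ P := by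
  set S : Set (Set A) := {G | IsRLFilter G ∧ F ⊆ G ∧ y ∉ G} with hS
  have hchainub : ∀ c ⊆ S, IsChain (· ⊆ ·) c → c.Nonempty →
      ∃ ub ∈ S, ∀ s ∈ c, s ⊆ ub := by
    intro c hcS hchain hcne
    refine ⟨⋃₀ c, ⟨⟨?_, ?_, ?_⟩, ?_, ?_⟩, fun s hs => Set.subset_sUnion_of_mem hs⟩
    · obtain ⟨G, hG⟩ := hcne
      obtain ⟨g, hg⟩ := (hcS hG).1.1
      exact ⟨g, G, hG, hg⟩
    · rintro u ⟨G1, hG1, hu⟩ v ⟨G2, hG2, hv⟩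
      rcases hchain.total hG1 hG2 with h | h
      · exact ⟨G2, hG2, (hcS hG2).1.2.1 u (h hu) v hv⟩
      · exact ⟨G1, hG1, (hcS hG1).1.2.1 u hu v (h hv)⟩
    · rintro u ⟨G, hG, hu⟩ v
      exact ⟨G, hG, (hcS hG).1.2.2 u hu v⟩
    · obtain ⟨G, hG⟩ := hcne
      exact le_trans (hcS hG).2.1 (Set.subset_sUnion_of_mem hG)
    · rintro ⟨G, hG, hyG⟩
      exact (hcS hG).2.2 hyG
  obtain ⟨P, hFP, hPS, hPmax⟩ := zorn_subset_nonempty S hchainub F ⟨hF, le_refl F, hy⟩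
  · refine ⟨P, ⟨hPS.1, ?_, ?_⟩, hPS.2.1, hPS.2.2⟩
    · intro h
      exact hPS.2.2 (h ▸ Set.mem_univ y)
    · intro a b hab
      by_contra hcon
      push_neg at hcon
      obtain ⟨ha, hb⟩ := hcon
      -- filter generated by P and an element c
      have key : ∀ c : A, c ∉ P →
          ∃ p ∈ P, ∃ n : ℕ, p * c ^ n ≤ y := by
        intro c hc
        set G : Set A := {z | ∃ p ∈ P, ∃ n : ℕ, p * c ^ n ≤ z} with hG
        have hGfil : IsRLFilter G := by
          refine ⟨⟨c, 1, one_mem hPS.1, 1, by simp [mul_le_right]⟩, ?_, ?_⟩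
          · rintro u ⟨p, hp, n, hu⟩ v ⟨q, hq, m, hv⟩
            refine ⟨p * q, hPS.1.2.1 p hp q hq, n + m, ?_⟩
            calc p * q * c ^ (n + m) = (p * c ^ n) * (q * c ^ m) := by
                  rw [pow_add]; exact mul_mul_mul_comm p q _ _
            _ ≤ u * v := mul_le_mul'' hu hv
          · rintro u ⟨p, hp, n, hu⟩ v
            exact ⟨p, hp, n, le_trans hu le_sup_left⟩
        have hPG : P ⊆ G := by
          intro p hp
          exact ⟨p, hp, 0, by simp⟩
        by_contra hyG
        push_neg at hyG
        have hyG' : y ∉ G := by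
          rintro ⟨p, hp, n, h'⟩
          exact absurd h' (hyG p hp n)
        have : G ∈ S := ⟨hGfil, le_trans hPS.2.1 hPG, hyG'⟩
        have hGP : G ⊆ P := hPmax this hPG
        exact hc (hGP ⟨1, one_mem hPS.1, 1, by simp [mul_le_right]⟩)
      obtain ⟨p, hp, n, hpn⟩ := key a ha
      obtain ⟨q, hq, m, hqm⟩ := key b hb
      have hr : p * q ∈ P := hPS.1.2.1 p hp q hq
      have hz : p * q * (a ⊔ b) ^ (m * n) ∈ P :=
        hPS.1.2.1 _ hr _ (pow_mem hPS.1 hab (m * n))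
      have hle : p * q * (a ⊔ b) ^ (m * n) ≤ y := by
        calc p * q * (a ⊔ b) ^ (m * n) ≤ p * q * (a ^ n ⊔ b ^ m) :=
              mul_le_mul'' le_rfl (sup_pow_pow_le a b n m)
        _ = p * q * a ^ n ⊔ p * q * b ^ m := mul_sup _ _ _
        _ ≤ p * a ^ n ⊔ q * b ^ m := by
              apply sup_le_sup
              · exact mul_le_mul'' (mul_le_left p q) le_rfl
              · exact mul_le_mul'' (mul_le_right p q) le_rfl
        _ ≤ y := sup_le hpn hqm
      exact hPS.2.2 (mem_of_le hPS.1 hz hle)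

/-- If every prime filter is an α-filter, then A is weakly disjunctive. -/
lemma alpha_prime_to_wd (h : ∀ P : Set A, IsRLPrime P → IsAlphaFilter P)
    (x y : A) (hxy : rperp x = rperp y) : PFil x = PFil y := by
  have main : ∀ u v : A, rperp u = rperp v → v ∈ PFil u := by
    intro u v huv
    by_contra hv
    obtain ⟨P, hP, hsub, hyP⟩ := prime_extension (PFil_filter u) hv
    have hu : u ∈ P := hsub (self_mem_PFil u)
    have : v ∈ Coann (rperp u) := huv ▸ self_mem_coann_rperp v
    exact hyP ((h P hP).2 u hu this)
  apply Set.Subset.antisymm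
  · exact PFil_subset (PFil_filter y) (main y x hxy.symm)
  · exact PFil_subset (PFil_filter x) (main x y hxy)

end RL15

theorem stmt15 :
    ((∀ x y : A, rperp x = rperp y → PFil x = PFil y) ↔
      (∀ F : Set A, IsRLFilter F → IsAlphaFilter F)) ∧
    ((∀ F : Set A, IsRLFilter F → IsAlphaFilter F) ↔
      (∀ P : Set A, IsRLPrime P → IsAlphaFilter P)) := by
  constructor
  · constructor
    · intro h F hF
      exact RL15.wd_to_alpha h hF
    · intro h
      exact RL15.alpha_prime_to_wd (fun P hP => h P hP.1)
  · constructor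
    · intro h P hP
      exact h P hP.1
    · intro h F hF
      exact RL15.wd_to_alpha (RL15.alpha_prime_to_wd h) hF
end
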